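/- Let P_{XY} be a joint probability mass function on a finite set 𝒳 × 𝒴, let y ∈ 𝒴 satisfy P_Y(y) > 0, assume P_{X|Y}(x|y) > 0 for every x ∈ 𝒳 with P_X(x) > 0, and let h : ℕ → [0, ∞) be any function. Then for every finite set 𝒰 and every channel P_{U|X}, [min over guessing functions G of ∑_{u ∈ 𝒰} h(G(u)) P_U(u)] ≤ (max_{x : P_X(x) > 0} P_X(x)/P_{X|Y}(x|y)) · [min over guessing functions G of ∑_{u ∈ 𝒰} h(G(u)) P_{U|Y}(u|y)]. -/
import Mathlib


open Finset

/-- The `h`-guesswork of a pmf `P` on a finite set `U`: the minimum over all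
guessing functions (bijections `G : U → {1,…,n}`) of `∑ u, h(G(u)) · P(u)`. -/
noncomputable def hGuesswork {U : Type*} [Fintype U] (h : ℕ → ℝ) (P : U → ℝ) : ℝ :=
  ⨅ G : U ≃ Fin (Fintype.card U), ∑ u, h ((G u).val + 1) * P u

/-- **Upper bound for the pointwise `h(G)`-guesswork leakage.**
Let `P_{XY}` be a joint pmf on a finite set `𝒳 × 𝒴`, let `y` satisfy
`P_Y(y) > 0`, assume `P_{X|Y}(x|y) > 0` whenever `P_X(x) > 0`, and let
`h : ℕ → [0,∞)` be any function.  Then for every finite set `𝒰` (wlog `Fin n`)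
and every channel `P_{U|X}`,
`min_G ∑ h(G(u)) P_U(u) ≤ (max_{x : P_X(x)>0} P_X(x)/P_{X|Y}(x|y)) · min_G ∑ h(G(u)) P_{U|Y}(u|y)`. -/
theorem pointwise_hG_guesswork_leakage_upper_bound
    {X Y : Type*} [Fintype X] [Fintype Y]
    (PXY : X → Y → ℝ)
    (hnn : ∀ x y, 0 ≤ PXY x y)
    (hsum : ∑ x, ∑ y, PXY x y = 1)
    (y : Y)
    (hy : 0 < ∑ x, PXY x y)
    (habs : ∀ x, 0 < ∑ y', PXY x y' → 0 < PXY x y / ∑ x', PXY x' y)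
    (h : ℕ → ℝ)
    (hhnn : ∀ n, 0 ≤ h n) :
    ∀ (n : ℕ) (K : X → Fin n → ℝ),
      (∀ x u, 0 ≤ K x u) → (∀ x, ∑ u, K x u = 1) →
      hGuesswork h (fun u => ∑ x, K x u * (∑ y', PXY x y')) ≤
        (⨆ x : {x : X // 0 < ∑ y', PXY x y'},
            (∑ y', PXY x.1 y') / (PXY x.1 y / ∑ x', PXY x' y)) *
          hGuesswork h (fun u => ∑ x, K x u * (PXY x y / ∑ x', PXY x' y)) := by
  intro n K hKnn hKsum
  classical
  set C : ℝ := ⨆ x : {x : X // 0 < ∑ y', PXY x y'},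
      (∑ y', PXY x.1 y') / (PXY x.1 y / ∑ x', PXY x' y) with hC
  -- There exists x with positive marginal
  have hne : Nonempty {x : X // 0 < ∑ y', PXY x y'} := by
    by_contra hcon
    simp only [nonempty_subtype, not_exists] at hcon
    have : ∑ x, ∑ y', PXY x y' = 0 := by
      apply Finset.sum_eq_zero
      intro x _
      have h1 : 0 ≤ ∑ y', PXY x y' := Finset.sum_nonneg fun _ _ => hnn _ _
      have h2 := hcon x
      linarith [lt_or_eq_of_le h1]
      
    linarith [hsum, this]
  have hbdd : BddAbove (Set.range fun x : {x : X // 0 < ∑ y', PXY x y'} =>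
      (∑ y', PXY x.1 y') / (PXY x.1 y / ∑ x', PXY x' y)) :=
    Set.Finite.bddAbove (Set.finite_range _)
  have hCnn : 0 ≤ C := by
    obtain ⟨x⟩ := hne
    have hle := le_ciSup hbdd x
    have : 0 ≤ (∑ y', PXY x.1 y') / (PXY x.1 y / ∑ x', PXY x' y) :=
      div_nonneg (Finset.sum_nonneg fun _ _ => hnn _ _) (le_of_lt (habs x.1 x.2))
    linarith
  -- key pointwise bound on x
  have key : ∀ x : X, (∑ y', PXY x y') ≤ C * (PXY x y / ∑ x', PXY x' y) := by
    intro x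
    by_cases hx : 0 < ∑ y', PXY x y'
    · have hq := habs x hx
      have hle := le_ciSup hbdd ⟨x, hx⟩
      calc (∑ y', PXY x y')
          = ((∑ y', PXY x y') / (PXY x y / ∑ x', PXY x' y)) * (PXY x y / ∑ x', PXY x' y) :=
            (div_mul_cancel₀ _ (ne_of_gt hq)).symm
        _ ≤ C * (PXY x y / ∑ x', PXY x' y) := by
            apply mul_le_mul_of_nonneg_right hle (le_of_lt hq)
    · have h1 : 0 ≤ ∑ y', PXY x y' := Finset.sum_nonneg fun _ _ => hnn _ _
      have h2 : (∑ y', PXY x y') = 0 := le_antisymm (not_lt.mp hx) h1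
      rw [h2]
      exact mul_nonneg hCnn (div_nonneg (hnn x y) (le_of_lt hy))
  -- pointwise bound on u
  have hpt : ∀ u : Fin n, (∑ x, K x u * (∑ y', PXY x y')) ≤
      C * ∑ x, K x u * (PXY x y / ∑ x', PXY x' y) := by
    intro u
    rw [Finset.mul_sum]
    apply Finset.sum_le_sum
    intro x _
    calc K x u * (∑ y', PXY x y') ≤ K x u * (C * (PXY x y / ∑ x', PXY x' y)) :=
          mul_le_mul_of_nonneg_left (key x) (hKnn x u)
      _ = C * (K x u * (PXY x y / ∑ x', PXY x' y)) := by ring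
  -- sum-level bound for each guessing function
  have hsumG : ∀ G : Fin n ≃ Fin (Fintype.card (Fin n)),
      (∑ u, h ((G u).val + 1) * (∑ x, K x u * (∑ y', PXY x y'))) ≤
      C * ∑ u, h ((G u).val + 1) * (∑ x, K x u * (PXY x y / ∑ x', PXY x' y)) := by
    intro G
    rw [Finset.mul_sum]
    apply Finset.sum_le_sum
    intro u _
    calc h ((G u).val + 1) * (∑ x, K x u * (∑ y', PXY x y'))
        ≤ h ((G u).val + 1) * (C * ∑ x, K x u * (PXY x y / ∑ x', PXY x' y)) :=
          mul_le_mul_of_nonneg_left (hpt u) (hhnn _)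
      _ = C * (h ((G u).val + 1) * ∑ x, K x u * (PXY x y / ∑ x', PXY x' y)) := by ring
  have : Nonempty (Fin n ≃ Fin (Fintype.card (Fin n))) := ⟨Fintype.equivFin _⟩
  unfold hGuesswork
  rw [Real.mul_iInf_of_nonneg hCnn]
  have hbddBelow : BddBelow (Set.range fun G : Fin n ≃ Fin (Fintype.card (Fin n)) =>
      ∑ u, h ((G u).val + 1) * (∑ x, K x u * (∑ y', PXY x y'))) := by
    refine ⟨0, ?_⟩
    rintro r ⟨G, rfl⟩
    exact Finset.sum_nonneg fun u _ => mul_nonneg (hhnn _)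
      (Finset.sum_nonneg fun x _ => mul_nonneg (hKnn x u)
        (Finset.sum_nonneg fun _ _ => hnn _ _))
  apply le_ciInf
  intro G
  exact le_trans (ciInf_le hbddBelow G) (hsumG G)
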